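/- Let F be a finite metric space with at least two points and no focal points. Then dim_fH(F) ≤ dim_fB(F) ≤ ln(|F| − 1) / ln(Δ(F)/∇(F)), where |F| is the number of points of F. -/
import Mathlib


open Metric

namespace FinDim

variable {X : Type*} [MetricSpace X]

/-- `ν_F(a)`: the distance from `a` to a nearest other point of `F`. -/
noncomputable def nu (F : Finset X) (a : X) : ℝ :=
  sInf {r : ℝ | ∃ x ∈ F, x ≠ a ∧ r = dist a x}

/-- `δ(F)`: the separation of `F`, the minimum distance between distinct points. -/
noncomputable def sep (F : Finset X) : ℝ :=
  sInf {r : ℝ | ∃ x ∈ F, ∃ y ∈ F, x ≠ y ∧ r = dist x y}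

/-- A 2-covering of `F`: a family of subsets of `F` covering `F`,
each member having at least two elements. -/
def IsTwoCover (F : Finset X) (U : Finset (Finset X)) : Prop :=
  (∀ V ∈ U, V ⊆ F) ∧ (∀ V ∈ U, 2 ≤ V.card) ∧ ∀ a ∈ F, ∃ V ∈ U, a ∈ V

/-- `Δ(𝒰)`: maximum diameter of the members of the family `𝒰`. -/
noncomputable def coverDiam (U : Finset (Finset X)) : ℝ :=
  sSup {r : ℝ | ∃ V ∈ U, r = Metric.diam (V : Set X)}

/-- `∇(F)`: the covering diameter of `F`. -/
noncomputable def nablaF (F : Finset X) : ℝ :=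
  sInf {r : ℝ | ∃ U : Finset (Finset X), IsTwoCover F U ∧ r = coverDiam U}

/-- `a` is a focal point of `F`. -/
def IsFocal (F : Finset X) (a : X) : Prop :=
  a ∈ F ∧ ∀ x ∈ F, x ≠ a → dist a x = Metric.diam (F : Set X)

/-- `H^s_𝒰(F) = Σ_{U ∈ 𝒰} Δ(U)^s`. -/
noncomputable def Hcov (U : Finset (Finset X)) (s : ℝ) : ℝ :=
  ∑ V ∈ U, Metric.diam (V : Set X) ^ s

/-- `H^s(F)`: minimum of `H^s_𝒰(F)` over 2-coverings `𝒰` with `Δ(𝒰) = ∇(F)`. -/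
noncomputable def HH (F : Finset X) (s : ℝ) : ℝ :=
  sInf {h : ℝ | ∃ U : Finset (Finset X),
    IsTwoCover F U ∧ coverDiam U = nablaF F ∧ h = Hcov U s}

/-- The finite Hausdorff dimension: the unique `s₀ ∈ (0,∞)` with
`H^{s₀}(F) = Δ(F)^{s₀}` (when `F` has no focal points). -/
noncomputable def dimfH (F : Finset X) : ℝ :=
  sInf {s : ℝ | 0 < s ∧ HH F s = Metric.diam (F : Set X) ^ s}

/-- `T_{∇(F)}(F)`: the minimal cardinality of a 2-covering `𝒰` with `Δ(𝒰) = ∇(F)`. -/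
noncomputable def Tmin (F : Finset X) : ℕ :=
  sInf {n : ℕ | ∃ U : Finset (Finset X),
    IsTwoCover F U ∧ coverDiam U = nablaF F ∧ U.card = n}

/-- The finite box dimension `dim_fB(F) = ln T_{∇(F)}(F) / ln (Δ(F)/∇(F))`. -/
noncomputable def dimfB (F : Finset X) : ℝ :=
  Real.log (Tmin F) / Real.log (Metric.diam (F : Set X) / nablaF F)

/-- `ν_A(x)` for a subset `A` of a metric space. -/
noncomputable def nuSet {Z : Type*} [MetricSpace Z] (A : Set Z) (x : Z) : ℝ :=
  sInf {r : ℝ | ∃ y ∈ A, y ≠ x ∧ r = dist x y}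

/-- `∇(A) = sup {ν_A(x) : x ∈ A}` for a subset `A` of a metric space. -/
noncomputable def nablaSet {Z : Type*} [MetricSpace Z] (A : Set Z) : ℝ :=
  sSup {r : ℝ | ∃ x ∈ A, r = nuSet A x}

end FinDim

namespace FinDimAux

open FinDim Finset
open scoped Classical

variable {X : Type*} [MetricSpace X]

lemma nu_set_eq (F : Finset X) (a : X) :
    {r : ℝ | ∃ x ∈ F, x ≠ a ∧ r = dist a x}
      = (((F.erase a).image (fun x => dist a x) : Finset ℝ) : Set ℝ) := by
  ext r
  simp only [Set.mem_setOf_eq, coe_image, Set.mem_image, mem_coe, mem_erase]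
  constructor
  · rintro ⟨x, hx, hxa, rfl⟩; exact ⟨x, ⟨hxa, hx⟩, rfl⟩
  · rintro ⟨x, ⟨hxa, hx⟩, rfl⟩; exact ⟨x, hx, hxa, rfl⟩

lemma erase_nonempty {F : Finset X} (hF : 2 ≤ F.card) (a : X) : (F.erase a).Nonempty := by
  rw [← Finset.card_pos]
  by_cases ha : a ∈ F
  · rw [Finset.card_erase_of_mem ha]; omega
  · rw [Finset.erase_eq_of_notMem ha]; omega

lemma nu_spec {F : Finset X} (hF : 2 ≤ F.card) (a : X) :
    (∃ x ∈ F, x ≠ a ∧ dist a x = nu F a) ∧ ∀ x ∈ F, x ≠ a → nu F a ≤ dist a x := by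
  have hne : (F.erase a).Nonempty := erase_nonempty hF a
  have hne' : ((F.erase a).image (fun x => dist a x)).Nonempty := hne.image _
  have h1 : nu F a = ((F.erase a).image (fun x => dist a x)).min' hne' := by
    rw [nu, nu_set_eq]; exact hne'.csInf_eq_min'
  constructor
  · have hm := Finset.min'_mem _ hne'
    rw [← h1] at hm
    obtain ⟨x, hx, hx2⟩ := Finset.mem_image.mp hm
    exact ⟨x, (mem_erase.mp hx).2, (mem_erase.mp hx).1, hx2⟩
  · intro x hx hxa
    rw [h1]
    exact Finset.min'_le _ _ (mem_image_of_mem _ (mem_erase.mpr ⟨hxa, hx⟩))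

lemma nu_pos {F : Finset X} (hF : 2 ≤ F.card) (a : X) : 0 < nu F a := by
  obtain ⟨x, _, hxa, hd⟩ := (nu_spec hF a).1
  rw [← hd]
  exact dist_pos.mpr (Ne.symm hxa)

lemma coverDiam_set_eq (U : Finset (Finset X)) :
    {r : ℝ | ∃ V ∈ U, r = Metric.diam (V : Set X)}
      = ((U.image (fun V : Finset X => Metric.diam (V : Set X)) : Finset ℝ) : Set ℝ) := by
  ext r
  simp only [Set.mem_setOf_eq, coe_image, Set.mem_image, mem_coe]
  constructor
  · rintro ⟨V, hV, rfl⟩; exact ⟨V, hV, rfl⟩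
  · rintro ⟨V, hV, rfl⟩; exact ⟨V, hV, rfl⟩

lemma coverDiam_eq_max' {U : Finset (Finset X)} (hU : U.Nonempty) :
    coverDiam U = (U.image (fun V : Finset X => Metric.diam (V : Set X))).max' (hU.image _) := by
  rw [coverDiam, coverDiam_set_eq]; exact (hU.image (fun V : Finset X => Metric.diam (V : Set X))).csSup_eq_max'

lemma le_coverDiam {U : Finset (Finset X)} {V : Finset X} (hV : V ∈ U) :
    Metric.diam (V : Set X) ≤ coverDiam U := by
  rw [coverDiam_eq_max' ⟨V, hV⟩]
  exact Finset.le_max' (U.image (fun V : Finset X => Metric.diam (V : Set X))) _ (mem_image_of_mem _ hV)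

lemma diam_finset_pair (a b : X) :
    Metric.diam ((({a, b} : Finset X) : Set X)) = dist a b := by
  have : ((({a, b} : Finset X)) : Set X) = ({a, b} : Set X) := by simp
  rw [this, Metric.diam_pair]


lemma key (F : Finset X) (hF : 2 ≤ F.card) (hfoc : ∀ a, ¬ IsFocal F a) :
    0 < nablaF F ∧ nablaF F < Metric.diam (F : Set X) ∧
    ∃ U : Finset (Finset X), IsTwoCover F U ∧ coverDiam U = nablaF F ∧ U.card ≤ F.card - 1 := by
  have hFne : F.Nonempty := Finset.card_pos.mp (by omega)
  have hbdF : Bornology.IsBounded (F : Set X) := F.finite_toSet.isBounded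
  have hsel : ∀ a : X, a ∈ F → ∃ x, x ∈ F ∧ x ≠ a ∧ dist a x = nu F a := by
    intro a _
    obtain ⟨x, hx, hxa, hd⟩ := (nu_spec hF a).1
    exact ⟨x, hx, hxa, hd⟩
  choose! n hnF hnne hnd using hsel
  obtain ⟨a0, ha0F, ha0max⟩ := F.exists_max_image (nu F) hFne
  set b := n a0 with hb
  have hbF : b ∈ F := hnF a0 ha0F
  have hba0 : b ≠ a0 := hnne a0 ha0F
  have hda0 : dist a0 b = nu F a0 := hnd a0 ha0F
  set P : X → Finset X := fun a => {a, n a} with hP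
  set U₁ : Finset (Finset X) := (F.erase b).image P with hU₁def
  have ha0e : a0 ∈ F.erase b := Finset.mem_erase.mpr ⟨Ne.symm hba0, ha0F⟩
  have hU₁ne : U₁.Nonempty := (erase_nonempty hF b).image P
  have hcover : IsTwoCover F U₁ := by
    refine ⟨?_, ?_, ?_⟩
    · intro V hV
      obtain ⟨a, ha, rfl⟩ := Finset.mem_image.mp hV
      have haF : a ∈ F := (Finset.mem_erase.mp ha).2
      intro x hx
      simp only [hP, Finset.mem_insert, Finset.mem_singleton] at hx
      rcases hx with rfl | rfl
      · exact haF
      · exact hnF a haF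
    · intro V hV
      obtain ⟨a, ha, rfl⟩ := Finset.mem_image.mp hV
      have haF : a ∈ F := (Finset.mem_erase.mp ha).2
      exact le_of_eq (Finset.card_pair (Ne.symm (hnne a haF))).symm
    · intro a haF
      by_cases hab : a = b
      · refine ⟨P a0, Finset.mem_image_of_mem P ha0e, ?_⟩
        subst hab
        simp [hP, hb]
      · exact ⟨P a, Finset.mem_image_of_mem P (Finset.mem_erase.mpr ⟨hab, haF⟩), by simp [hP]⟩
  have hdiamP : ∀ a ∈ F, Metric.diam ((P a : Finset X) : Set X) = nu F a := by
    intro a haF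
    simp only [hP]
    rw [diam_finset_pair]
    exact hnd a haF
  have hcd : coverDiam U₁ = nu F a0 := by
    rw [coverDiam_eq_max' hU₁ne]
    apply le_antisymm
    · apply Finset.max'_le
      intro y hy
      obtain ⟨V, hV, rfl⟩ := Finset.mem_image.mp hy
      obtain ⟨a, ha, rfl⟩ := Finset.mem_image.mp hV
      rw [hdiamP a (Finset.mem_erase.mp ha).2]
      exact ha0max a (Finset.mem_erase.mp ha).2
    · apply Finset.le_max'
      exact Finset.mem_image.mpr ⟨P a0, Finset.mem_image_of_mem P ha0e, hdiamP a0 ha0F⟩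
  have hlb : ∀ U : Finset (Finset X), IsTwoCover F U → nu F a0 ≤ coverDiam U := by
    intro U hU
    obtain ⟨V, hVU, ha0V⟩ := hU.2.2 a0 ha0F
    obtain ⟨x, hxV, hxa0⟩ := Finset.exists_mem_ne
      (lt_of_lt_of_le one_lt_two (hU.2.1 V hVU)) a0
    have hxF : x ∈ F := hU.1 V hVU hxV
    calc nu F a0 ≤ dist a0 x := (nu_spec hF a0).2 x hxF hxa0
    _ ≤ Metric.diam (V : Set X) :=
        Metric.dist_le_diam_of_mem V.finite_toSet.isBounded ha0V hxV
    _ ≤ coverDiam U := le_coverDiam hVU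
  have hnabla : nablaF F = nu F a0 := by
    apply le_antisymm
    · exact csInf_le ⟨nu F a0, by rintro r ⟨U, hU, rfl⟩; exact hlb U hU⟩ ⟨U₁, hcover, hcd.symm⟩
    · exact le_csInf ⟨coverDiam U₁, U₁, hcover, rfl⟩ (by rintro r ⟨U, hU, rfl⟩; exact hlb U hU)
  refine ⟨?_, ?_, U₁, hcover, by rw [hcd, hnabla], ?_⟩
  · rw [hnabla]; exact nu_pos hF a0
  · rw [hnabla]
    have hle : nu F a0 ≤ Metric.diam (F : Set X) := by
      rw [← hda0]; exact Metric.dist_le_diam_of_mem hbdF ha0F hbF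
    rcases lt_or_eq_of_le hle with h | h
    · exact h
    · exfalso
      apply hfoc a0
      refine ⟨ha0F, fun x hx hxa => le_antisymm (Metric.dist_le_diam_of_mem hbdF ha0F hx) ?_⟩
      rw [← h]; exact (nu_spec hF a0).2 x hx hxa
  · calc U₁.card ≤ (F.erase b).card := Finset.card_image_le
    _ = F.card - 1 := Finset.card_erase_of_mem hbF


lemma diam_pos_of_two {V : Finset X} (h : 2 ≤ V.card) : 0 < Metric.diam (V : Set X) := by
  obtain ⟨a, ha, b, hb, hab⟩ := Finset.one_lt_card.mp (by omega : 1 < V.card)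
  calc (0:ℝ) < dist a b := dist_pos.mpr hab
  _ ≤ Metric.diam (V : Set X) :=
      Metric.dist_le_diam_of_mem V.finite_toSet.isBounded ha hb

lemma continuous_Hcov {U : Finset (Finset X)}
    (h : ∀ V ∈ U, 0 < Metric.diam (V : Set X)) :
    Continuous (fun s => Hcov U s) := by
  apply continuous_finset_sum
  intro V hV
  have hx := h V hV
  show Continuous fun s : ℝ => Metric.diam (V : Set X) ^ s
  have hde : (fun s : ℝ => Metric.diam (V : Set X) ^ s)
      = fun s => Real.exp (Real.log (Metric.diam (V : Set X)) * s) :=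
    funext fun s => Real.rpow_def_of_pos hx s
  rw [hde]
  exact Real.continuous_exp.comp (continuous_const.mul continuous_id)

lemma continuous_inf' {ι : Type*} (C : Finset ι) (hC : C.Nonempty) (f : ι → ℝ → ℝ)
    (hf : ∀ i ∈ C, Continuous (f i)) :
    Continuous (fun s => C.inf' hC (fun i => f i s)) := by
  induction hC using Finset.Nonempty.cons_induction with
  | singleton a => simpa using hf a (by simp)
  | cons a t h ht ih =>
    have heq : (fun s => (Finset.cons a t h).inf' (Finset.cons_nonempty h) (fun i => f i s))
        = fun s => (f a s) ⊓ (t.inf' ht fun i => f i s) :=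
      funext fun s => Finset.inf'_cons ht (fun i => f i s)
    rw [heq]
    exact Continuous.min (hf a (Finset.mem_cons_self a t))
      (ih (fun i hi => hf i (Finset.mem_cons_of_mem hi)))

end FinDimAux



open FinDim in
/-- `dim_fH(F) ≤ dim_fB(F) ≤ ln(|F|−1)/ln(Δ(F)/∇(F))`. -/
theorem stmt8 {X : Type*} [MetricSpace X] (F : Finset X) (hF : 2 ≤ F.card)
    (hfoc : ∀ a, ¬ IsFocal F a) :
    dimfH F ≤ dimfB F ∧
    dimfB F ≤ Real.log ((F.card : ℝ) - 1) / Real.log (Metric.diam (F : Set X) / nablaF F) := by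
  classical
  obtain ⟨hnb0, hnbD, U₁, hU₁, hU₁d, hU₁c⟩ := FinDimAux.key F hF hfoc
  set Δ := Metric.diam (F : Set X) with hΔdef
  set nb := nablaF F with hnbdef
  have hΔ0 : 0 < Δ := hnb0.trans hnbD
  have hlog : 0 < Real.log (Δ / nb) := Real.log_pos ((one_lt_div hnb0).mpr hnbD)
  set C : Finset (Finset (Finset X)) :=
    (F.powerset.powerset).filter (fun U => IsTwoCover F U ∧ coverDiam U = nablaF F) with hCdef
  have hmemC : ∀ U : Finset (Finset X), U ∈ C ↔ IsTwoCover F U ∧ coverDiam U = nablaF F := by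
    intro U
    simp only [hCdef, Finset.mem_filter, Finset.mem_powerset]
    constructor
    · exact fun h => h.2
    · intro h
      exact ⟨fun V hV => Finset.mem_powerset.mpr (h.1.1 V hV), h⟩
  have hU₁C : U₁ ∈ C := (hmemC U₁).mpr ⟨hU₁, hU₁d⟩
  have hCne : C.Nonempty := ⟨U₁, hU₁C⟩
  have hcard2 : ∀ U ∈ C, 2 ≤ U.card := by
    intro U hU
    obtain ⟨hUc, hUd⟩ := (hmemC U).mp hU
    have hFne : F.Nonempty := Finset.card_pos.mp (by omega)
    obtain ⟨a, haF⟩ := hFne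
    obtain ⟨V, hVU, _⟩ := hUc.2.2 a haF
    have h1 : 0 < U.card := Finset.card_pos.mpr ⟨V, hVU⟩
    by_contra h
    have hone : U.card = 1 := by omega
    obtain ⟨W, rfl⟩ := Finset.card_eq_one.mp hone
    have hWF : W = F := by
      apply Finset.Subset.antisymm (hUc.1 W (Finset.mem_singleton_self W))
      intro x hxF
      obtain ⟨V', hV', hxV'⟩ := hUc.2.2 x hxF
      rwa [Finset.mem_singleton.mp hV'] at hxV'
    have hWd : coverDiam ({W} : Finset (Finset X)) = Metric.diam (W : Set X) := by
      rw [FinDimAux.coverDiam_eq_max' (Finset.singleton_nonempty W)]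
      simp
    rw [hUd, hWF] at hWd
    rw [← hnbdef, ← hΔdef] at hWd
    linarith
  have hHH : ∀ s : ℝ, HH F s = C.inf' hCne (fun U => Hcov U s) := by
    intro s
    rw [Finset.inf'_eq_csInf_image]
    simp only [HH]
    congr 1
    ext h
    simp only [Set.mem_setOf_eq, Set.mem_image, Finset.mem_coe, hmemC]
    constructor
    · rintro ⟨U, h1, h2, rfl⟩; exact ⟨U, ⟨h1, h2⟩, rfl⟩
    · rintro ⟨U, ⟨h1, h2⟩, rfl⟩; exact ⟨U, h1, h2, rfl⟩
  have hcontU : ∀ U ∈ C, Continuous (fun s => Hcov U s) := by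
    intro U hU
    apply FinDimAux.continuous_Hcov
    intro V hV
    exact FinDimAux.diam_pos_of_two (((hmemC U).mp hU).1.2.1 V hV)
  have hHHcont : Continuous (fun s => HH F s) := by
    have hc := FinDimAux.continuous_inf' C hCne (fun U s => Hcov U s) hcontU
    have heq : (fun s => HH F s) = fun s => C.inf' hCne (fun U => Hcov U s) := funext hHH
    rw [heq]
    exact hc
  obtain ⟨Um, hUm, hUmd, hUmcard⟩ :
      ∃ U : Finset (Finset X), IsTwoCover F U ∧ coverDiam U = nablaF F ∧ U.card = Tmin F :=
    Nat.sInf_mem (⟨U₁.card, U₁, hU₁, hU₁d, rfl⟩ :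
      {n : ℕ | ∃ U : Finset (Finset X),
        IsTwoCover F U ∧ coverDiam U = nablaF F ∧ U.card = n}.Nonempty)
  have hUmC : Um ∈ C := (hmemC Um).mpr ⟨hUm, hUmd⟩
  have hT2 : 2 ≤ Tmin F := hUmcard ▸ hcard2 Um hUmC
  have hTle : Tmin F ≤ F.card - 1 := le_trans (Nat.sInf_le ⟨U₁, hU₁, hU₁d, rfl⟩) hU₁c
  have hT1 : (1:ℝ) < ((Tmin F : ℕ) : ℝ) := by exact_mod_cast (by omega : 1 < Tmin F)
  set sB := dimfB F with hsBdef
  have hsBval : sB = Real.log (Tmin F) / Real.log (Δ / nb) := rfl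
  have hsB0 : 0 < sB := by rw [hsBval]; exact div_pos (Real.log_pos hT1) hlog
  have hTrpow : ((Tmin F : ℕ) : ℝ) = (Δ / nb) ^ sB := by
    rw [Real.rpow_def_of_pos (div_pos hΔ0 hnb0), hsBval]
    have harith : Real.log (Δ / nb) * (Real.log (Tmin F) / Real.log (Δ / nb))
        = Real.log (Tmin F) := by field_simp
    rw [harith, Real.exp_log (by linarith)]
  have hkey : HH F sB ≤ Δ ^ sB := by
    rw [hHH sB]
    calc C.inf' hCne (fun U => Hcov U sB) ≤ Hcov Um sB := Finset.inf'_le _ hUmC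
    _ ≤ ∑ _V ∈ Um, nb ^ sB := by
        apply Finset.sum_le_sum
        intro V hV
        exact Real.rpow_le_rpow Metric.diam_nonneg
          (le_of_le_of_eq (FinDimAux.le_coverDiam hV) hUmd) hsB0.le
    _ = ((Tmin F : ℕ) : ℝ) * nb ^ sB := by
        rw [Finset.sum_const, hUmcard, nsmul_eq_mul]
    _ = (Δ / nb) ^ sB * nb ^ sB := by rw [hTrpow]
    _ = Δ ^ sB := by
        rw [← Real.mul_rpow (le_of_lt (div_pos hΔ0 hnb0)) hnb0.le, div_mul_cancel₀ _ hnb0.ne']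
  have hHH0 : (2:ℝ) ≤ HH F 0 := by
    rw [hHH 0]
    apply Finset.le_inf'
    intro U hU
    have hc : Hcov U 0 = (U.card : ℝ) := by
      simp only [Hcov, Real.rpow_zero, Finset.sum_const, nsmul_eq_mul, mul_one]
    rw [hc]
    exact_mod_cast hcard2 U hU
  have hgcont : ContinuousOn (fun s => HH F s - Δ ^ s) (Set.Icc 0 sB) := by
    apply Continuous.continuousOn
    apply hHHcont.sub
    show Continuous fun s : ℝ => Δ ^ s
    have hde : (fun s : ℝ => Δ ^ s) = fun s => Real.exp (Real.log Δ * s) :=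
      funext fun s => Real.rpow_def_of_pos hΔ0 s
    rw [hde]
    exact Real.continuous_exp.comp (continuous_const.mul continuous_id)
  have h0mem : (0:ℝ) ∈ Set.Icc ((fun s => HH F s - Δ ^ s) sB) ((fun s => HH F s - Δ ^ s) 0) := by
    constructor
    · simp only
      linarith
    · simp only [Real.rpow_zero]
      linarith
  obtain ⟨s, hsIcc, hs0⟩ := intermediate_value_Icc' hsB0.le hgcont h0mem
  simp only at hs0
  have hspos : 0 < s := by
    rcases lt_or_eq_of_le hsIcc.1 with h | h
    · exact h
    · exfalso
      rw [← h, Real.rpow_zero] at hs0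
      linarith
  have hHs : HH F s = Δ ^ s := by linarith
  constructor
  · calc dimfH F ≤ s := csInf_le ⟨0, fun t ht => ht.1.le⟩ ⟨hspos, hHs⟩
    _ ≤ sB := hsIcc.2
  · show Real.log (Tmin F) / Real.log (Δ / nb) ≤ Real.log ((F.card : ℝ) - 1) / Real.log (Δ / nb)
    have hcast : ((Tmin F : ℕ) : ℝ) ≤ (F.card : ℝ) - 1 := by
      have h1 : ((Tmin F : ℕ) : ℝ) ≤ ((F.card - 1 : ℕ) : ℝ) := Nat.cast_le.mpr hTle
      rwa [Nat.cast_sub (by omega), Nat.cast_one] at h1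
    have hlogle : Real.log (Tmin F) ≤ Real.log ((F.card : ℝ) - 1) :=
      Real.log_le_log (by linarith) hcast
    exact div_le_div_of_nonneg_right hlogle hlog.le
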